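/- Let P be a large-tree forcing notion, n ≥ 1, T an n-collage over P, and D ⊆ P×_{E0}P an open dense subset of P×_{E0}P. Then there is an n-collage Q over P such that Q ⊆_n T and ⟨Q→s, Q→t⟩ ∈ D whenever s, t ∈ 2^n and s(n−1) ≠ t(n−1). -/

import Mathlib

namespace E0L

/-- Finite binary strings `2^{<ω}`. -/
abbrev Str : Type := List Bool

/-- Sets of binary strings (in particular, trees). -/
abbrev Tr : Type := Set Str

/-- The action `s·t` of a string on a string:
`(s·t)(k) = t(k) + s(k) mod 2` for `k < min(|s|,|t|)` and `(s·t)(k) = t(k)` otherwise. -/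
def act (s t : Str) : Str := List.ofFn fun k : Fin t.length => Bool.xor (s.getD k false) (t.get k)

/-- The action `s·T` of a string on a set of strings. -/
def actT (s : Str) (T : Tr) : Tr := (act s) '' T

/-- `T ↾ s = {t ∈ T : s ⊆ t or t ⊆ s}`. -/
def restr (T : Tr) (s : Str) : Tr := {t ∈ T | s <+: t ∨ t <+: s}

/-- `[T]`, the set of infinite branches of `T` (as elements of Cantor space `2^ω`). -/
def branches (T : Tr) : Set (ℕ → Bool) := {x | ∀ n : ℕ, (List.ofFn fun k : Fin n => x k) ∈ T}

/-- `T[s] = {t : s ⊆ t or t ⊂ s}`. -/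
def Tbr (s : Str) : Tr := {t | s <+: t ∨ (t <+: s ∧ t ≠ s)}

/-- `LTwit T r q` : the strings `q i n` witness that `T` is an E0-large tree with stem `r`:
`|q^0_n| = |q^1_n| ≥ 1`, `q^i_n(0) = i`, and `T` consists of all initial segments of strings
of the form `r⌢q^{i(0)}_0⌢…⌢q^{i(n)}_n`. -/
def LTwit (T : Tr) (r : Str) (q : ℕ → Bool → Str) : Prop :=
  (∀ n : ℕ, (q n true).length = (q n false).length ∧ 1 ≤ (q n false).length) ∧
  (∀ n : ℕ, ∀ i : Bool, (q n i).head? = some i) ∧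
  T = {t | ∃ n : ℕ, ∃ f : ℕ → Bool,
        t <+: r ++ ((List.range (n+1)).map (fun k => q k (f k))).flatten}

/-- `T` is an E0-large tree (`T ∈ LT`). -/
def IsLT (T : Tr) : Prop := ∃ r q, LTwit T r q

/-- `stem T` : the longest `s ∈ T` with `T = T↾s`. -/
noncomputable def stem (T : Tr) : Str :=
  Classical.epsilon fun s => s ∈ T ∧ restr T s = T ∧ ∀ t ∈ T, restr T t = T → t.length ≤ s.length

/-- The canonical witness `(r, q)` of an E0-large tree. -/
noncomputable def witness (T : Tr) : Str × (ℕ → Bool → Str) :=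
  Classical.epsilon fun rq => LTwit T rq.1 rq.2

/-- Splitting levels computed from a witness: `spl_0 = |r|`, `spl_{n+1} = spl_n + |q^i_n|`. -/
def splN (r : Str) (q : ℕ → Bool → Str) : ℕ → ℕ
  | 0 => r.length
  | n+1 => splN r q n + (q n false).length

/-- `spl T n`, the `n`-th splitting level of an E0-large tree `T`. -/
noncomputable def spl (T : Tr) (n : ℕ) : ℕ := splN (witness T).1 (witness T).2 n

/-- Simple splitting `T→i = T↾(stem(T)⌢i)`. -/
noncomputable def split1 (T : Tr) (i : Bool) : Tr := restr T (stem T ++ [i])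

/-- Iterated splitting `T→s`: `T→Λ = T`, `T→(s⌢i) = (T→s)→i`. -/
noncomputable def splitS (T : Tr) (s : Str) : Tr := s.foldl split1 T

/-- `S ⊆_n T` : `S ⊆ T` and `spl_k(S) = spl_k(T)` for all `k < n`. -/
def subN (n : ℕ) (S T : Tr) : Prop := S ⊆ T ∧ ∀ k < n, spl S k = spl T k

/-- A large-tree forcing notion: a set of E0-large trees closed under restriction
and under the action of strings. -/
def IsLTF (P : Set Tr) : Prop :=
  (∀ T ∈ P, IsLT T) ∧
  (∀ T ∈ P, ∀ u ∈ T, restr T u ∈ P) ∧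
  (∀ T ∈ P, ∀ s : Str, actT s T ∈ P)

/-- `T` is an `n`-collage over `P`: `T ∈ LT` and `T→s ∈ P` for all `s ∈ 2^n`. -/
def IsCollage (P : Set Tr) (n : ℕ) (T : Tr) : Prop :=
  IsLT T ∧ ∀ s : Str, s.length = n → splitS T s ∈ P

/-- `D` is open dense in `P` (as a set of trees). -/
def OpenDense1 (P D : Set Tr) : Prop :=
  D ⊆ P ∧ (∀ S ∈ P, ∃ T ∈ D, T ⊆ S) ∧ (∀ S ∈ P, ∀ T ∈ D, S ⊆ T → S ∈ D)

/-- `⟨T,T'⟩` is a condition of the conditional product `P ×_{E0} P`. -/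
def CondPair (P : Set Tr) (p : Tr × Tr) : Prop :=
  p.1 ∈ P ∧ p.2 ∈ P ∧ ∃ s : Str, actT s p.1 = p.2

/-- Componentwise order on pairs of trees: `p ≤ q`. -/
def pleq (p q : Tr × Tr) : Prop := p.1 ⊆ q.1 ∧ p.2 ⊆ q.2

/-- Compatibility of two conditions in `P ×_{E0} P`. -/
def Compat (P : Set Tr) (p q : Tr × Tr) : Prop :=
  ∃ r : Tr × Tr, CondPair P r ∧ pleq r p ∧ pleq r q

/-- `D` is pre-dense in `P ×_{E0} P`. -/
def PreDense2 (P : Set Tr) (D : Set (Tr × Tr)) : Prop :=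
  ∀ p : Tr × Tr, CondPair P p → ∃ q ∈ D, Compat P p q

/-- `D` is open dense in `P ×_{E0} P`. -/
def OpenDense2 (P : Set Tr) (D : Set (Tr × Tr)) : Prop :=
  D ⊆ {p | CondPair P p} ∧
  (∀ p : Tr × Tr, CondPair P p → ∃ q ∈ D, pleq q p) ∧
  (∀ p : Tr × Tr, CondPair P p → ∀ q ∈ D, pleq p q → p ∈ D)

/-- A `P ×_{E0} P`-real name `c = ⟨C_n^i⟩`. -/
def IsRealName (P : Set Tr) (c : ℕ → Bool → Set (Tr × Tr)) : Prop :=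
  (∀ n : ℕ, ∀ i : Bool, c n i ⊆ {p | CondPair P p}) ∧
  (∀ n : ℕ, PreDense2 P (c n false ∪ c n true)) ∧
  (∀ n : ℕ, ∀ p ∈ c n false, ∀ q ∈ c n true, ¬ Compat P p q)

/-- `p` directly forces `c(n) = i`. -/
def DFVal (c : ℕ → Bool → Set (Tr × Tr)) (p : Tr × Tr) (n : ℕ) (i : Bool) : Prop :=
  ∃ q ∈ c n i, pleq p q

/-- `p` directly forces `s ⊂ c`. -/
def DFPrefix (c : ℕ → Bool → Set (Tr × Tr)) (p : Tr × Tr) (s : Str) : Prop :=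
  ∀ n < s.length, DFVal c p n (s.getD n false)

/-- `p` directly forces `c ∉ [U]`. -/
def DFAvoid (c : ℕ → Bool → Set (Tr × Tr)) (p : Tr × Tr) (U : Tr) : Prop :=
  ∃ s : Str, s ∉ U ∧ DFPrefix c p s

/-- `p` directly forces `c ≠ d`: there are incomparable strings `s, t` such that
`p` directly forces `s ⊂ c` and `t ⊂ d`. -/
def DFNe (c d : ℕ → Bool → Set (Tr × Tr)) (p : Tr × Tr) : Prop :=
  ∃ s t : Str, ¬ s <+: t ∧ ¬ t <+: s ∧ DFPrefix c p s ∧ DFPrefix d p t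

/-- The action `σ·c` of a string on a real name. -/
def actName (σ : Str) (c : ℕ → Bool → Set (Tr × Tr)) : ℕ → Bool → Set (Tr × Tr) :=
  fun n i => if σ.getD n false = true then c n (!i) else c n i

/-- The name `π_left` of the left generic real. -/
def piLeft : ℕ → Bool → Set (Tr × Tr) := fun n i =>
  {p | ∃ s t : Str, s.length = n+1 ∧ t.length = n+1 ∧ s.getD n false = i ∧ p = (Tbr s, Tbr t)}

/-- The name `π_right` of the right generic real. -/
def piRight : ℕ → Bool → Set (Tr × Tr) := fun n i =>
  {p | ∃ s t : Str, s.length = n+1 ∧ t.length = n+1 ∧ t.getD n false = i ∧ p = (Tbr s, Tbr t)}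


/-! ### Toolkit -/

section Toolkit

open List

/-- Validity of a block system. -/
def Qok (q : ℕ → Bool → Str) : Prop :=
  (∀ n : ℕ, (q n true).length = (q n false).length ∧ 1 ≤ (q n false).length) ∧
  (∀ n : ℕ, ∀ i : Bool, (q n i).head? = some i)

/-- Partial concatenations `r ⌢ q 0 (f 0) ⌢ … ⌢ q (k-1) (f (k-1))`. -/
def Fl (r : Str) (q : ℕ → Bool → Str) : ℕ → (ℕ → Bool) → Str
  | 0, _ => r
  | (k+1), f => Fl r q k f ++ q k (f k)

/-- The E0-large tree generated by `r` and `q`. -/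
def W (r : Str) (q : ℕ → Bool → Str) : Tr := {t | ∃ n f, t <+: Fl r q (n+1) f}

/-- Shifted block system. -/
def qS (q : ℕ → Bool → Str) (m : ℕ) : ℕ → Bool → Str := fun k => q (k + m)

lemma Qok.len {q} (h : Qok q) (k : ℕ) (i : Bool) : (q k i).length = (q k false).length := by
  cases i
  · rfl
  · exact (h.1 k).1

lemma Qok.pos {q} (h : Qok q) (k : ℕ) (i : Bool) : 1 ≤ (q k i).length := by
  rw [h.len k i]; exact (h.1 k).2

lemma Qok.ne_nil {q} (h : Qok q) (k : ℕ) (i : Bool) : q k i ≠ [] := by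
  intro hn
  have := h.pos k i
  rw [hn] at this; simp at this

lemma Qok.cons {q} (h : Qok q) (k : ℕ) (i : Bool) : ∃ w, q k i = i :: w := by
  rcases hq : q k i with _ | ⟨a, w⟩
  · exact absurd hq (h.ne_nil k i)
  · have := h.2 k i
    rw [hq] at this
    simp at this
    exact ⟨w, by rw [this]⟩

lemma Qok.qS {q} (h : Qok q) (m : ℕ) : Qok (qS q m) :=
  ⟨fun n => h.1 (n + m), fun n i => h.2 (n + m) i⟩

lemma qS_zero (q : ℕ → Bool → Str) : qS q 0 = q := rfl

lemma qS_qS (q : ℕ → Bool → Str) (m m' : ℕ) : qS (qS q m) m' = qS q (m' + m) := by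
  funext k i; simp [qS, Nat.add_assoc]

lemma flatten_eq_Fl (r : Str) (q : ℕ → Bool → Str) (n : ℕ) (f : ℕ → Bool) :
    r ++ ((List.range (n+1)).map (fun k => q k (f k))).flatten = Fl r q (n+1) f := by
  induction n with
  | zero => simp [Fl, List.range_succ]
  | succ n ih =>
      rw [show n+1+1 = (n+1)+1 from rfl, List.range_succ]
      simp only [List.map_append, List.flatten_append]
      rw [← List.append_assoc, ih]
      simp [Fl]

lemma LTwit_iff (T : Tr) (r : Str) (q : ℕ → Bool → Str) :
    LTwit T r q ↔ Qok q ∧ T = W r q := by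
  constructor
  · rintro ⟨h1, h2, h3⟩
    refine ⟨⟨h1, h2⟩, ?_⟩
    rw [h3]; ext t
    simp only [W, Set.mem_setOf_eq]
    constructor
    · rintro ⟨n, f, hp⟩; exact ⟨n, f, by rwa [flatten_eq_Fl] at hp⟩
    · rintro ⟨n, f, hp⟩; exact ⟨n, f, by rwa [flatten_eq_Fl]⟩
  · rintro ⟨⟨h1, h2⟩, h3⟩
    refine ⟨h1, h2, ?_⟩
    rw [h3]; ext t
    simp only [W, Set.mem_setOf_eq]
    constructor
    · rintro ⟨n, f, hp⟩; exact ⟨n, f, by rwa [flatten_eq_Fl]⟩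
    · rintro ⟨n, f, hp⟩; exact ⟨n, f, by rwa [flatten_eq_Fl] at hp⟩

lemma LTwit_W {r q} (h : Qok q) : LTwit (W r q) r q := (LTwit_iff _ _ _).2 ⟨h, rfl⟩

lemma IsLT_W {r q} (h : Qok q) : IsLT (W r q) := ⟨r, q, LTwit_W h⟩

/-! #### lengths -/

lemma splN_succ (r q k) : splN r q (k+1) = splN r q k + (q k false).length := rfl

lemma length_Fl {q} (h : Qok q) (r : Str) (k : ℕ) (f : ℕ → Bool) :
    (Fl r q k f).length = splN r q k := by
  induction k with
  | zero => rfl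
  | succ k ih => simp [Fl, splN, ih, h.len k (f k)]

lemma splN_strictMono {q} (h : Qok q) (r : Str) : StrictMono (splN r q) := by
  apply strictMono_nat_of_lt_succ
  intro k
  have := h.pos k false
  simp only [splN_succ]; omega

lemma splN_le {q} (h : Qok q) (r : Str) {j k : ℕ} (hjk : j ≤ k) : splN r q j ≤ splN r q k :=
  (splN_strictMono h r).monotone hjk

lemma splN_ge {q} (h : Qok q) (r : Str) (k : ℕ) : r.length + k ≤ splN r q k := by
  induction k with
  | zero => simp [splN]
  | succ k ih =>
      have := h.pos k false
      simp only [splN_succ]; omega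

lemma length_le_splN {q} (h : Qok q) (r : Str) (k : ℕ) : r.length ≤ splN r q k := by
  have := splN_ge h r k; omega

/-! #### prefix facts -/

lemma Fl_prefix_succ (r q k f) : Fl r q k f <+: Fl r q (k+1) f := by
  simp [Fl, List.prefix_append]

lemma Fl_prefix (r q f) {k k' : ℕ} (hk : k ≤ k') : Fl r q k f <+: Fl r q k' f := by
  induction k' with
  | zero => simp at hk; subst hk; exact List.prefix_refl _
  | succ k' ih =>
      rcases Nat.lt_or_ge k (k'+1) with h | h
      · exact (ih (by omega)).trans (Fl_prefix_succ _ _ _ _)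
      · have : k = k' + 1 := by omega
        subst this; exact List.prefix_refl _

lemma r_prefix_Fl (r q k f) : r <+: Fl r q k f := Fl_prefix r q f (Nat.zero_le k)

lemma mem_W_of_prefix_Fl {r q t} {k : ℕ} {f} (hp : t <+: Fl r q k f) : t ∈ W r q :=
  ⟨k, f, hp.trans (Fl_prefix r q f (Nat.le_succ k))⟩

lemma Fl_mem_W (r q k f) : Fl r q k f ∈ W r q := mem_W_of_prefix_Fl (List.prefix_refl _)

lemma r_mem_W (r q) : r ∈ W r q := mem_W_of_prefix_Fl (r_prefix_Fl r q 0 (fun _ => false))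

lemma prefix_or_prefix {u v w : Str} (hu : u <+: w) (hv : v <+: w) : u <+: v ∨ v <+: u := by
  rcases le_total u.length v.length with h | h
  · exact Or.inl (List.prefix_of_prefix_length_le hu hv h)
  · exact Or.inr (List.prefix_of_prefix_length_le hv hu h)

/-! #### getD facts -/

lemma getD_prefix {u v : Str} (h : u <+: v) {j : ℕ} (hj : j < u.length) :
    u.getD j false = v.getD j false := by
  rw [List.getD_eq_getElem _ _ hj, List.getD_eq_getElem _ _ (hj.trans_le h.length_le)]
  exact h.getElem hj

lemma Fl_congr {r q q' k} {f g : ℕ → Bool}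
    (hq : ∀ j < k, ∀ i, q j i = q' j i) (hf : ∀ j < k, f j = g j) :
    Fl r q k f = Fl r q' k g := by
  induction k with
  | zero => rfl
  | succ k ih =>
      simp only [Fl]
      rw [ih (fun j hj i => hq j (by omega) i) (fun j hj => hf j (by omega)),
        hq k (by omega), hf k (by omega)]

lemma splN_congr {r q q' k} (hq : ∀ j < k, (q j false).length = (q' j false).length) :
    splN r q k = splN r q' k := by
  induction k with
  | zero => rfl
  | succ k ih =>
      simp only [splN_succ]
      rw [ih (fun j hj => hq j (by omega)), hq k (by omega)]

/-- value at a splitting position. -/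
lemma Fl_getD_spl {q} (h : Qok q) (r : Str) {k n : ℕ} (f : ℕ → Bool) (hk : k < n) :
    (Fl r q n f).getD (splN r q k) false = f k := by
  have h1 : Fl r q (k+1) f <+: Fl r q n f := Fl_prefix r q f hk
  have hlen : splN r q k < (Fl r q (k+1) f).length := by
    rw [length_Fl h]; exact splN_strictMono h r (Nat.lt_succ_self k)
  rw [← getD_prefix h1 hlen]
  simp only [Fl]
  rw [List.getD_append_right _ _ _ _ (by rw [length_Fl h])]
  rw [length_Fl h, Nat.sub_self]
  obtain ⟨w, hw⟩ := h.cons k (f k)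
  rw [hw]; rfl

/-- value inside a block. -/
lemma Fl_getD_inner {q} (h : Qok q) (r : Str) {k n j : ℕ} (f : ℕ → Bool) (hk : k < n)
    (h1 : splN r q k ≤ j) (h2 : j < splN r q (k+1)) :
    (Fl r q n f).getD j false = (q k (f k)).getD (j - splN r q k) false := by
  have hp : Fl r q (k+1) f <+: Fl r q n f := Fl_prefix r q f hk
  have hlen : j < (Fl r q (k+1) f).length := by rw [length_Fl h]; exact h2
  rw [← getD_prefix hp hlen]
  simp only [Fl]
  rw [List.getD_append_right _ _ _ _ (by rw [length_Fl h]; exact h1), length_Fl h]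

lemma Fl_getD_low (r q n f) {j : ℕ} (hj : j < r.length) :
    (Fl r q n f).getD j false = r.getD j false :=
  (getD_prefix (r_prefix_Fl r q n f) hj).symm

/-- characterization for members of `W`. -/
lemma mem_W_getD_spl {r q t} (h : Qok q) (ht : t ∈ W r q) {k : ℕ} {n f}
    (hrep : t <+: Fl r q (n+1) f) (hk : k < n+1) (hlen : splN r q k < t.length) :
    t.getD (splN r q k) false = f k := by
  rw [getD_prefix hrep hlen]; exact Fl_getD_spl h r f hk

end Toolkit
section Toolkit2

open List

/-- `l` is a splitting level of `T`. -/
def SplitLev (T : Tr) (l : ℕ) : Prop :=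
  ∃ u : Str, u.length = l ∧ u ++ [false] ∈ T ∧ u ++ [true] ∈ T

lemma SplitLev.mono {S T : Tr} {l} (h : SplitLev S l) (hst : S ⊆ T) : SplitLev T l := by
  obtain ⟨u, h1, h2, h3⟩ := h
  exact ⟨u, h1, hst h2, hst h3⟩

lemma mem_W_snoc {r q} (h : Qok q) (k : ℕ) (f : ℕ → Bool) (i : Bool) :
    Fl r q k f ++ [i] ∈ W r q := by
  classical
  set g : ℕ → Bool := fun j => if j = k then i else f j with hg
  have h1 : Fl r q k g = Fl r q k f :=
    Fl_congr (fun _ _ _ => rfl) (fun j hj => by simp [hg, Nat.ne_of_lt hj])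
  have h2 : Fl r q (k+1) g = Fl r q k f ++ q k i := by
    show Fl r q k g ++ q k (g k) = _
    rw [h1]; simp [hg]
  refine mem_W_of_prefix_Fl (k := k+1) (f := g) ?_
  rw [h2]
  refine (List.prefix_append_right_inj _).mpr ?_
  obtain ⟨w, hw⟩ := h.cons k i
  rw [hw]
  exact ⟨w, rfl⟩

lemma splitLev_splN {r q} (h : Qok q) (k : ℕ) : SplitLev (W r q) (splN r q k) :=
  ⟨Fl r q k (fun _ => false), length_Fl h r k _,
    mem_W_snoc h k _ false, mem_W_snoc h k _ true⟩

lemma splN_of_splitLev {r q l} (h : Qok q) (hl : SplitLev (W r q) l) :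
    ∃ k, splN r q k = l := by
  obtain ⟨u, hu, h0, h1⟩ := hl
  obtain ⟨n0, f0, hp0⟩ := h0
  obtain ⟨n1, f1, hp1⟩ := h1
  have hul0 : (u ++ [false]).length = l + 1 := by simp [hu]
  have hul1 : (u ++ [true]).length = l + 1 := by simp [hu]
  have hgd0 : (u ++ [false]).getD l false = false := by
    rw [List.getD_append_right _ _ _ _ (by omega), hu, Nat.sub_self]; rfl
  have hgd1 : (u ++ [true]).getD l false = true := by
    rw [List.getD_append_right _ _ _ _ (by omega), hu, Nat.sub_self]; rfl
  -- l ≥ |r|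
  have hrl : r.length ≤ l := by
    by_contra hc
    push_neg at hc
    have e0 := getD_prefix hp0 (j := l) (by omega)
    have e1 := getD_prefix hp1 (j := l) (by omega)
    rw [Fl_getD_low r q _ f0 hc] at e0
    rw [Fl_getD_low r q _ f1 hc] at e1
    rw [hgd0] at e0; rw [hgd1] at e1
    rw [← e0] at e1; simp at e1
  -- find k with splN k ≤ l < splN (k+1)
  have hex : ∃ k, l < splN r q (k+1) := by
    refine ⟨l, ?_⟩
    have := splN_ge h r (l+1)
    omega
  classical
  set k := Nat.find hex with hk
  have hlt : l < splN r q (k+1) := Nat.find_spec hex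
  have hle : splN r q k ≤ l := by
    rcases Nat.eq_zero_or_pos k with h0 | h0
    · rw [h0]; exact hrl
    · have hmin := Nat.find_min hex (m := k - 1) (by omega)
      push_neg at hmin
      have hk1 : k - 1 + 1 = k := by omega
      rw [hk1] at hmin
      omega
  rcases Nat.eq_or_lt_of_le hle with heq | hlt2
  · exact ⟨k, heq⟩
  exfalso
  -- inner position: both extensions forced equal
  have hkn0 : k < n0 + 1 := by
    have : l < (Fl r q (n0+1) f0).length := by
      have := List.IsPrefix.length_le hp0; omega
    rw [length_Fl h] at this
    have := (splN_strictMono h r).lt_iff_lt (a := k) (b := n0 + 1)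
    omega
  have hkn1 : k < n1 + 1 := by
    have : l < (Fl r q (n1+1) f1).length := by
      have := List.IsPrefix.length_le hp1; omega
    rw [length_Fl h] at this
    have := (splN_strictMono h r).lt_iff_lt (a := k) (b := n1 + 1)
    omega
  have e0 := getD_prefix hp0 (j := l) (by omega)
  have e1 := getD_prefix hp1 (j := l) (by omega)
  rw [Fl_getD_inner h r f0 hkn0 hle hlt] at e0
  rw [Fl_getD_inner h r f1 hkn1 hle hlt] at e1
  -- heads at splN k agree with u
  have hu0 : (u ++ [false]).getD (splN r q k) false = u.getD (splN r q k) false := by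
    rw [List.getD_append _ _ _ _ (by omega)]
  have hu1 : (u ++ [true]).getD (splN r q k) false = u.getD (splN r q k) false := by
    rw [List.getD_append _ _ _ _ (by omega)]
  have f0k : f0 k = u.getD (splN r q k) false := by
    rw [← hu0, getD_prefix hp0 (j := splN r q k) (by omega)]
    exact (Fl_getD_spl h r f0 hkn0).symm
  have f1k : f1 k = u.getD (splN r q k) false := by
    rw [← hu1, getD_prefix hp1 (j := splN r q k) (by omega)]
    exact (Fl_getD_spl h r f1 hkn1).symm
  rw [hgd0] at e0; rw [hgd1] at e1
  rw [f0k] at e0; rw [f1k] at e1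
  rw [← e0] at e1
  simp at e1

lemma splN_unique {r q r' q'} (h : Qok q) (h' : Qok q') (hW : W r q = W r' q') :
    splN r q = splN r' q' := by
  have hr : Set.range (splN r q) = Set.range (splN r' q') := by
    ext l
    simp only [Set.mem_range]
    constructor
    · rintro ⟨k, rfl⟩
      exact splN_of_splitLev h' (hW ▸ splitLev_splN h k)
    · rintro ⟨k, rfl⟩
      exact splN_of_splitLev h (hW ▸ splitLev_splN h' k)
  exact (StrictMono.range_inj (splN_strictMono h r) (splN_strictMono h' r')).1 hr

lemma stem_W {r q} (h : Qok q) : stem (W r q) = r := by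
  set T := W r q with hT
  have hpred : r ∈ T ∧ restr T r = T ∧ ∀ t ∈ T, restr T t = T → t.length ≤ r.length := by
    refine ⟨r_mem_W r q, ?_, ?_⟩
    · ext t
      simp only [restr, Set.mem_setOf_eq, Set.mem_sep_iff]
      constructor
      · exact fun ht => ht.1
      · intro ht
        refine ⟨ht, ?_⟩
        obtain ⟨n, f, hp⟩ := ht
        rcases prefix_or_prefix (r_prefix_Fl r q (n+1) f) hp with hc | hc
        · exact Or.inl hc
        · exact Or.inr hc
    · intro t ht hres
      by_contra hc
      push_neg at hc
      have key : ∀ e ∈ T, t <+: e ∨ e <+: t := by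
        intro e he
        have : e ∈ restr T t := hres.symm ▸ he
        exact this.2
      set e0 := Fl r q 1 (fun _ => false) with he0
      set e1 := Fl r q 1 (fun _ => true) with he1
      have he0m : e0 ∈ T := Fl_mem_W r q 1 _
      have he1m : e1 ∈ T := Fl_mem_W r q 1 _
      have hlen0 : e0.length = splN r q 1 := length_Fl h r 1 _
      have hlen1 : e1.length = splN r q 1 := length_Fl h r 1 _
      have hgd0 : e0.getD r.length false = false := by
        have : r.length = splN r q 0 := rfl
        rw [he0, this, Fl_getD_spl h r _ (by omega)]
      have hgd1 : e1.getD r.length false = true := by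
        have : r.length = splN r q 0 := rfl
        rw [he1, this, Fl_getD_spl h r _ (by omega)]
      have hrlen : r.length < splN r q 1 := by
        have : splN r q 0 < splN r q 1 := splN_strictMono h r (by omega)
        simpa [splN] using this
      -- t comparable with both e0 e1 and longer than r: contradiction
      have c0 := key e0 he0m
      have c1 := key e1 he1m
      have hne : ¬ (e0.getD r.length false = e1.getD r.length false) := by
        rw [hgd0, hgd1]; exact Bool.false_ne_true
      rcases c0 with c0 | c0 <;> rcases c1 with c1 | c1
      · exact hne (by rw [← getD_prefix c0 (by omega), ← getD_prefix c1 (by omega)])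
      · -- e1 <+: t, t <+: e0
        have : e1 <+: e0 := c1.trans c0
        exact hne (by rw [(getD_prefix this (by omega)).symm])
      · have : e0 <+: e1 := c0.trans c1
        exact hne (getD_prefix this (by omega))
      · -- e0 <+: t, e1 <+: t
        rcases prefix_or_prefix c0 c1 with hc2 | hc2
        · exact hne (getD_prefix hc2 (by omega))
        · exact hne (by rw [(getD_prefix hc2 (by omega)).symm])
  have hst := Classical.epsilon_spec (p := fun s =>
    s ∈ T ∧ restr T s = T ∧ ∀ t ∈ T, restr T t = T → t.length ≤ s.length) ⟨r, hpred⟩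
  set s := Classical.epsilon (fun s =>
    s ∈ T ∧ restr T s = T ∧ ∀ t ∈ T, restr T t = T → t.length ≤ s.length) with hs
  have h1 : s.length ≤ r.length := hpred.2.2 s hst.1 hst.2.1
  have h2 : r.length ≤ s.length := hst.2.2 r hpred.1 hpred.2.1
  have hlen : s.length = r.length := by omega
  obtain ⟨n, f, hp⟩ := hst.1
  have hr : r <+: Fl r q (n+1) f := r_prefix_Fl r q (n+1) f
  rcases prefix_or_prefix hp hr with hc | hc
  · exact hc.eq_of_length hlen
  · exact (hc.eq_of_length hlen.symm).symm

lemma spl_eq {T r q} (h : LTwit T r q) (k : ℕ) : spl T k = splN r q k := by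
  have hwit := Classical.epsilon_spec (p := fun rq : Str × (ℕ → Bool → Str) =>
    LTwit T rq.1 rq.2) ⟨(r, q), h⟩
  obtain ⟨hok, hW⟩ := (LTwit_iff _ _ _).1 h
  obtain ⟨hok', hW'⟩ := (LTwit_iff _ _ _).1 hwit
  have := splN_unique hok' hok (by rw [← hW, ← hW'])
  show splN (witness T).1 (witness T).2 k = _
  rw [show (witness T) = Classical.epsilon (fun rq : Str × (ℕ → Bool → Str) =>
    LTwit T rq.1 rq.2) from rfl]
  exact congrFun this k

end Toolkit2
section Toolkit3

open List

lemma Fl_shift (r : Str) (q : ℕ → Bool → Str) (k : ℕ) (f : ℕ → Bool) :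
    Fl r q (k+1) f = Fl (r ++ q 0 (f 0)) (qS q 1) k (fun j => f (j+1)) := by
  induction k with
  | zero => rfl
  | succ k ih =>
      show Fl r q (k+1) f ++ q (k+1) (f (k+1)) = _
      rw [ih]; rfl

/-- restriction of a generated tree at `r ++ [i]`. -/
lemma restr_W {r q} (h : Qok q) (i : Bool) :
    restr (W r q) (r ++ [i]) = W (r ++ q 0 i) (qS q 1) := by
  ext t
  simp only [restr, Set.mem_setOf_eq, Set.mem_sep_iff]
  constructor
  · rintro ⟨⟨n, f, hp⟩, hc⟩
    rcases hc with hc | hc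
    swap
    · -- t <+: r ++ [i]
      refine ⟨0, fun _ => false, ?_⟩
      have h1 : r ++ [i] <+: r ++ q 0 i := by
        refine (List.prefix_append_right_inj r).mpr ?_
        obtain ⟨w, hw⟩ := h.cons 0 i
        rw [hw]; exact ⟨w, rfl⟩
      exact hc.trans (h1.trans (r_prefix_Fl (r ++ q 0 i) (qS q 1) 1 (fun _ => false)))
    · -- r ++ [i] <+: t
      have hf0 : f 0 = i := by
        have hlen : r.length < t.length := by
          have := List.IsPrefix.length_le hc
          simp only [List.length_append, List.length_cons, List.length_nil] at this
          omega
        have h1 : t.getD r.length false = f 0 := by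
          rw [getD_prefix hp hlen]
          have : r.length = splN r q 0 := rfl
          rw [this, Fl_getD_spl h r f (by omega)]
        have h2 : t.getD r.length false = i := by
          rw [← getD_prefix hc (j := r.length) (by simp)]
          rw [List.getD_append_right _ _ _ _ (le_refl _), Nat.sub_self]; rfl
        rw [← h1, h2]
      have hbig : t <+: Fl r q (n+2) f := hp.trans (Fl_prefix_succ r q (n+1) f)
      rw [Fl_shift r q (n+1) f, hf0] at hbig
      exact ⟨n, fun j => f (j+1), hbig⟩
  · rintro ⟨n, g, hp⟩
    classical
    set f : ℕ → Bool := fun j => if j = 0 then i else g (j-1) with hf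
    have hshift : Fl (r ++ q 0 i) (qS q 1) (n+1) g = Fl r q ((n+1)+1) f := by
      rw [Fl_shift r q (n+1) f]
      have hf0 : f 0 = i := if_pos rfl
      rw [hf0]
      refine Fl_congr (fun _ _ _ => rfl) (fun j hj => ?_)
      simp [hf]
    have hmem : t ∈ W r q := by
      rw [hshift] at hp
      exact mem_W_of_prefix_Fl hp
    refine ⟨hmem, ?_⟩
    have hri : r ++ [i] <+: Fl r q ((n+1)+1) f := by
      have h1 : r ++ [i] <+: r ++ q 0 i := by
        refine (List.prefix_append_right_inj r).mpr ?_
        obtain ⟨w, hw⟩ := h.cons 0 i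
        rw [hw]; exact ⟨w, rfl⟩
      have h2 : r ++ q 0 i <+: Fl r q ((n+1)+1) f := by
        have he : r ++ q 0 i = Fl r q 1 f := by
          have hf0 : f 0 = i := if_pos rfl
          simp [Fl, hf0]
        rw [he]; exact Fl_prefix r q f (by omega)
      exact h1.trans h2
    rw [hshift] at hp
    exact prefix_or_prefix hri hp

lemma split1_W {r q} (h : Qok q) (i : Bool) :
    split1 (W r q) i = W (r ++ q 0 i) (qS q 1) := by
  rw [split1, stem_W h, restr_W h]

/-- the stem of an iterated splitting. -/
def rS : Str → Str → (ℕ → Bool → Str) → Str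
  | [], r, _ => r
  | i :: v, r, q => rS v (r ++ q 0 i) (qS q 1)

lemma splitS_W {q} (h : Qok q) (r : Str) (u : Str) :
    splitS (W r q) u = W (rS u r q) (qS q u.length) := by
  induction u generalizing r q with
  | nil => simp [splitS, rS, qS_zero]
  | cons i v ih =>
      show splitS (split1 (W r q) i) v = _
      rw [split1_W h i, ih (h.qS 1)]
      simp [rS, qS_qS]

lemma rS_prefix (u r q) : r <+: rS u r q := by
  induction u generalizing r q with
  | nil => exact List.prefix_refl _
  | cons i v ih => exact (List.prefix_append r _).trans (ih _ _)

lemma splN_shift {q} (h : Qok q) (r : Str) (i : Bool) (k : ℕ) :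
    splN (r ++ q 0 i) (qS q 1) k = splN r q (k+1) := by
  induction k with
  | zero => simp [splN, h.len 0 i]
  | succ k ih => simp only [splN_succ, ih]; rfl

lemma rS_length {q} (h : Qok q) (u r) : (rS u r q).length = splN r q u.length := by
  induction u generalizing r q with
  | nil => rfl
  | cons i v ih =>
      show (rS v (r ++ q 0 i) (qS q 1)).length = _
      rw [ih (h.qS 1), splN_shift h]
      rfl

lemma rS_eq_Fl (u r q) : rS u r q = Fl r q u.length (fun k => u.getD k false) := by
  induction u generalizing r q with
  | nil => rfl
  | cons i v ih =>
      show rS v (r ++ q 0 i) (qS q 1) = _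
      rw [ih]
      rw [show (i :: v).length = v.length + 1 from rfl, Fl_shift]
      rfl

lemma Fl_add (r q) (m : ℕ) : ∀ (k : ℕ) (f : ℕ → Bool),
    Fl r q (m + k) f =
      Fl (rS (List.ofFn fun j : Fin m => f j) r q) (qS q m) k (fun j => f (j + m)) := by
  induction m generalizing r q with
  | zero => intro k f; simp [rS, qS_zero]
  | succ m ih =>
      intro k f
      rw [List.ofFn_succ]
      show Fl r q (m + 1 + k) f = Fl (rS _ (r ++ q 0 (f 0)) (qS q 1)) (qS q (m+1)) k _
      have h1 : m + 1 + k = (m + k) + 1 := by omega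
      rw [h1, Fl_shift]
      rw [ih (r ++ q 0 (f 0)) (qS q 1) k (fun j => f (j+1))]
      rfl

lemma splitS_subset (T : Tr) (u : Str) : splitS T u ⊆ T := by
  induction u generalizing T with
  | nil => exact subset_rfl
  | cons i v ih =>
      intro t ht
      have h1 : splitS T (i :: v) = splitS (split1 T i) v := rfl
      rw [h1] at ht
      have := ih (split1 T i) ht
      exact this.1

/-- stems extend under inclusion of generated trees. -/
lemma prefix_of_W_subset {r q r' q'} (h : Qok q) (h' : Qok q')
    (hsub : W r' q' ⊆ W r q) : r <+: r' := by
  rcases le_or_gt r.length r'.length with hle | hlt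
  · have hr' : r' ∈ W r q := hsub (r_mem_W r' q')
    obtain ⟨n, f, hp⟩ := hr'
    exact List.prefix_of_prefix_length_le (r_prefix_Fl r q (n+1) f) hp hle
  · exfalso
    have hsl : SplitLev (W r q) r'.length := by
      have : SplitLev (W r' q') (splN r' q' 0) := splitLev_splN h' 0
      exact SplitLev.mono this hsub
    obtain ⟨k, hk⟩ := splN_of_splitLev h hsl
    have : r.length ≤ splN r q k := length_le_splN h r k
    omega

/-! #### act -/

lemma act_length (s t : Str) : (act s t).length = t.length := by simp [act]

lemma act_getElem (s t : Str) {k : ℕ} (hk : k < t.length) :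
    (act s t)[k]'(by rw [act_length]; exact hk) = Bool.xor (s.getD k false) (t[k]) := by
  simp [act]

lemma act_getD (s t : Str) {k : ℕ} (hk : k < t.length) :
    (act s t).getD k false = Bool.xor (s.getD k false) (t.getD k false) := by
  rw [List.getD_eq_getElem _ _ (by rw [act_length]; exact hk), List.getD_eq_getElem _ _ hk]
  exact act_getElem s t hk

lemma act_append {σ x : Str} (y : Str) (h : σ.length ≤ x.length) :
    act σ (x ++ y) = act σ x ++ y := by
  refine List.ext_getElem (by simp [act_length]) ?_
  intro k h1 h2
  rw [act_length, List.length_append] at h1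
  rcases Nat.lt_or_ge k x.length with hk | hk
  · rw [act_getElem σ _ (by simp only [List.length_append]; omega)]
    rw [List.getElem_append_left (as := act σ x) (bs := y) (by rw [act_length]; exact hk)]
    rw [List.getElem_append_left (as := x) (bs := y) hk]
    rw [act_getElem σ _ hk]
  · rw [act_getElem σ _ (by simp only [List.length_append]; omega)]
    rw [List.getD_eq_default _ _ (by omega)]
    rw [List.getElem_append_right (as := act σ x) (bs := y) (by rw [act_length]; exact hk)]
    rw [List.getElem_append_right (as := x) (bs := y) hk]
    simp [act_length]

lemma act_act (σ t : Str) : act σ (act σ t) = t := by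
  refine List.ext_getElem (by simp [act_length]) ?_
  intro k h1 h2
  rw [act_getElem σ _ (by rw [act_length]; exact h2)]
  rw [act_getElem σ _ h2]
  cases σ.getD k false <;> simp

lemma act_xor {a b : Str} (h : a.length = b.length) : act (act a b) a = b := by
  refine List.ext_getElem (by simp [act_length, h]) ?_
  intro k h1 h2
  rw [act_length] at h1
  rw [act_getElem _ _ h1]
  rw [List.getD_eq_getElem _ _ (by rw [act_length]; omega)]
  rw [act_getElem a b (by omega)]
  rw [List.getD_eq_getElem _ _ h1]
  cases a[k] <;> cases b[k] <;> rfl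

lemma act_prefix (σ : Str) {u v : Str} (h : u <+: v) : act σ u <+: act σ v := by
  have : act σ u = (act σ v).take u.length := by
    refine List.ext_getElem (by simp [act_length, List.IsPrefix.length_le h]) ?_
    intro k h1 h2
    rw [act_length] at h1
    rw [act_getElem _ _ h1]
    rw [List.getElem_take]
    rw [act_getElem _ _ (by have := List.IsPrefix.length_le h; omega)]
    congr 1
    exact List.IsPrefix.getElem h h1
  rw [this]
  exact List.take_prefix _ _

lemma act_Fl {σ r : Str} (q : ℕ → Bool → Str) (h : Qok q) (hlen : σ.length ≤ r.length)
    (k : ℕ) (f : ℕ → Bool) : act σ (Fl r q k f) = Fl (act σ r) q k f := by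
  induction k with
  | zero => rfl
  | succ k ih =>
      show act σ (Fl r q k f ++ q k (f k)) = Fl (act σ r) q k f ++ q k (f k)
      rw [act_append _ (hlen.trans (by rw [length_Fl h]; exact length_le_splN h r k)), ih]

lemma actW {σ r : Str} {q} (h : Qok q) (hlen : σ.length ≤ r.length) :
    actT σ (W r q) = W (act σ r) q := by
  ext t
  simp only [actT, Set.mem_image]
  constructor
  · rintro ⟨e, ⟨n, f, hp⟩, rfl⟩
    refine ⟨n, f, ?_⟩
    rw [← act_Fl q h hlen]
    exact act_prefix σ hp
  · rintro ⟨n, f, hp⟩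
    refine ⟨act σ t, ⟨n, f, ?_⟩, act_act σ t⟩
    have := act_prefix σ hp
    rw [act_Fl q h (by rw [act_length]; exact hlen), act_act] at this
    exact this

lemma actT_mono (σ : Str) {S T : Tr} (h : S ⊆ T) : actT σ S ⊆ actT σ T :=
  Set.image_mono h

end Toolkit3
section Toolkit4

open List

lemma splitS_mem_P {P : Set Tr} (hP : IsLTF P) :
    ∀ (u : Str) {T : Tr} {r : Str} {q : ℕ → Bool → Str},
      T ∈ P → LTwit T r q → splitS T u ∈ P := by
  intro u
  induction u with
  | nil => intro T r q hT _; exact hT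
  | cons i v ih =>
      intro T r q hT hw
      obtain ⟨hok, rfl⟩ := (LTwit_iff _ _ _).1 hw
      have h1 : splitS (W r q) (i :: v) = splitS (split1 (W r q) i) v := rfl
      rw [h1, split1_W hok i]
      have hmem : W (r ++ q 0 i) (qS q 1) ∈ P := by
        rw [← split1_W hok i, split1, stem_W hok]
        refine hP.2.1 _ hT _ ?_
        exact mem_W_snoc hok 0 (fun _ => false) i
      exact ih hmem (LTwit_W (hok.qS 1))

lemma condPair_splitS {P : Set Tr} {r : Str} {q} (h : Qok q) {n : ℕ} {u v : Str}
    (hu : u.length = n) (hv : v.length = n)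
    (hPu : splitS (W r q) u ∈ P) (hPv : splitS (W r q) v ∈ P) :
    CondPair P (splitS (W r q) u, splitS (W r q) v) := by
  refine ⟨hPu, hPv, act (rS u r q) (rS v r q), ?_⟩
  have hlu : (rS u r q).length = splN r q n := by rw [rS_length h, hu]
  have hlv : (rS v r q).length = splN r q n := by rw [rS_length h, hv]
  show actT _ (splitS (W r q) u) = splitS (W r q) v
  rw [splitS_W h, splitS_W h, hu, hv]
  rw [actW (h.qS n) (by rw [act_length, hlv, hlu])]
  rw [act_xor (by rw [hlu, hlv])]

lemma condPair_of_collage {P : Set Tr} {n : ℕ} {Q : Tr} (hQ : IsCollage P n Q)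
    {u v : Str} (hu : u.length = n) (hv : v.length = n) :
    CondPair P (splitS Q u, splitS Q v) := by
  obtain ⟨⟨r, q, hw⟩, hcoll⟩ := hQ
  obtain ⟨hok, rfl⟩ := (LTwit_iff _ _ _).1 hw
  exact condPair_splitS hok hu hv (hcoll u hu) (hcoll v hv)

lemma exists_part {r : Str} {q} (h : Qok q) (n : ℕ) (hn : 1 ≤ n) {t : Str}
    (ht : t ∈ W r q) : ∃ u : Str, u.length = n ∧ t ∈ splitS (W r q) u := by
  obtain ⟨k, f, hp⟩ := ht
  set K := max (k+1) (n+1) with hK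
  have hp2 : t <+: Fl r q K f := hp.trans (Fl_prefix r q f (le_max_left _ _))
  have hKn : K = n + (K - n) := by omega
  rw [hKn, Fl_add r q n (K - n) f] at hp2
  obtain ⟨k', hk'⟩ : ∃ k', K - n = k' + 1 := ⟨K - n - 1, by omega⟩
  rw [hk'] at hp2
  refine ⟨List.ofFn fun j : Fin n => f j, by simp, ?_⟩
  rw [splitS_W h, show (List.ofFn fun j : Fin n => f j).length = n by simp]
  exact ⟨k', _, hp2⟩

/-- The one-step densification lemma. -/
lemma onestep {P : Set Tr} (hP : IsLTF P) {D : Set (Tr × Tr)} (hD : OpenDense2 P D)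
    {n' : ℕ} {T : Tr} (hT : IsCollage P (n'+1) T) {s t : Str}
    (hs : s.length = n'+1) (ht : t.length = n'+1)
    (hst : s.getD n' false ≠ t.getD n' false) :
    ∃ Q : Tr, IsCollage P (n'+1) Q ∧ subN (n'+1) Q T ∧
      (∀ u : Str, u.length = n'+1 → splitS Q u ⊆ splitS T u) ∧
      (splitS Q s, splitS Q t) ∈ D := by
  classical
  obtain ⟨⟨r, q, hw⟩, hcoll⟩ := hT
  obtain ⟨hok, rfl⟩ := (LTwit_iff _ _ _).1 hw
  set n := n' + 1 with hn
  -- the densification at the pair (s,t)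
  have hTs : splitS (W r q) s ∈ P := hcoll s hs
  have hTt : splitS (W r q) t ∈ P := hcoll t ht
  have hcond : CondPair P (splitS (W r q) s, splitS (W r q) t) :=
    condPair_splitS hok hs ht hTs hTt
  obtain ⟨⟨A, B⟩, hABD, hleAB⟩ := hD.2.1 _ hcond
  obtain ⟨hA, hB, ρ, hρ⟩ := hD.1 hABD
  simp only at hA hB hρ
  have hAsub : A ⊆ splitS (W r q) s := hleAB.1
  have hBsub : B ⊆ splitS (W r q) t := hleAB.2
  obtain ⟨α, π, hwA⟩ := hP.1 A hA
  obtain ⟨hokπ, rfl⟩ := (LTwit_iff _ _ _).1 hwA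
  -- shrink A to have a long stem
  set m := ρ.length with hm
  set v := List.replicate m false with hv
  have hvlen : v.length = m := List.length_replicate
  set α'' := rS v α π with hα''
  set π'' := qS π m with hπ''
  have hokπ'' : Qok π'' := hokπ.qS m
  have hA''eq : splitS (W α π) v = W α'' π'' := by rw [splitS_W hokπ, hvlen]
  have hα''len : α''.length = splN α π m := by rw [hα'', rS_length hokπ, hvlen]
  have hmα'' : m ≤ α''.length := by
    rw [hα''len]; have := splN_ge hokπ α m; omega
  have hA''P : W α'' π'' ∈ P := by
    rw [← hA''eq]; exact splitS_mem_P hP v hA (LTwit_W hokπ)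
  set β'' := act ρ α'' with hβ''
  have hB''eq : actT ρ (W α'' π'') = W β'' π'' := actW hokπ'' hmα''
  have hB''P : W β'' π'' ∈ P := by rw [← hB''eq]; exact hP.2.2 _ hA''P ρ
  have hA''sub : W α'' π'' ⊆ W α π := by rw [← hA''eq]; exact splitS_subset _ v
  have hB''sub : W β'' π'' ⊆ B := by
    rw [← hB''eq, ← hρ]; exact actT_mono ρ hA''sub
  have hD2 : (W α'' π'', W β'' π'') ∈ D := by
    refine hD.2.2 _ ⟨hA''P, hB''P, ρ, hB''eq⟩ _ hABD ⟨?_, ?_⟩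
    · exact hA''sub
    · exact hB''sub
  -- stems and decompositions
  set L := splN r q n with hL
  have hlens : (rS s r q).length = L := by rw [rS_length hok, hs]
  have hlent : (rS t r q).length = L := by rw [rS_length hok, ht]
  have hβ''len : β''.length = α''.length := act_length ρ α''
  have hαs : rS s r q <+: α'' := by
    have h1 : rS s r q <+: α := by
      refine prefix_of_W_subset (hok.qS n) hokπ ?_
      rw [← hs, ← splitS_W hok]
      exact hAsub
    exact h1.trans (rS_prefix v α π)
  have hαt : rS t r q <+: β'' := by
    refine prefix_of_W_subset (hok.qS n) hokπ'' ?_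
    rw [← ht, ← splitS_W hok]
    exact hB''sub.trans hBsub
  set δ0 := α''.drop L with hδ0
  set δ1 := β''.drop L with hδ1
  have hαdec : α'' = rS s r q ++ δ0 := by
    obtain ⟨w, hw2⟩ := hαs
    have hδ0w : δ0 = w := by rw [hδ0, ← hw2, ← hlens, List.drop_left]
    rw [hδ0w, hw2]
  have hβdec : β'' = rS t r q ++ δ1 := by
    obtain ⟨w, hw2⟩ := hαt
    have hδ1w : δ1 = w := by rw [hδ1, ← hw2, ← hlent, List.drop_left]
    rw [hδ1w, hw2]
  have hδlen : δ0.length = δ1.length := by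
    rw [hδ0, hδ1, List.length_drop, List.length_drop, hβ''len]
  -- the glued block system
  set i₀ := s.getD n' false with hi₀
  set d : Bool → Str := fun j => if j = i₀ then δ0 else δ1 with hd
  have hdlen : ∀ j, (d j).length = δ0.length := by
    intro j
    rw [hd]; by_cases hj : j = i₀ <;> simp [hj, hδlen]
  set qN : ℕ → Bool → Str := fun k i =>
    if k < n' then q k i else if k = n' then q n' i ++ d i else π'' (k - n) i with hqN
  have hqNlow : ∀ j < n', ∀ i, qN j i = q j i := by
    intro j hj i; rw [hqN]; simp [hj]
  have hqNn' : ∀ i, qN n' i = q n' i ++ d i := by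
    intro i; rw [hqN]; simp
  have hqNhigh : qS qN n = π'' := by
    funext k i
    rw [qS, hqN]
    have h1 : ¬ (k + n < n') := by omega
    have h2 : ¬ (k + n = n') := by omega
    simp only [h1, h2, if_false]
    congr 1
    omega
  have hokN : Qok qN := by
    constructor
    · intro k
      rcases Nat.lt_trichotomy k n' with hk | hk | hk
      · rw [hqNlow k hk true, hqNlow k hk false]; exact hok.1 k
      · subst hk
        rw [hqNn' true, hqNn' false]
        constructor
        · rw [List.length_append, List.length_append, hdlen true, hdlen false,
            (hok.1 k).1]
        · rw [List.length_append]
          have := (hok.1 k).2; omega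
      · have h1 : ¬ (k < n') := by omega
        have h2 : ¬ (k = n') := by omega
        rw [hqN]; simp only [h1, h2, if_false]
        exact hokπ''.1 (k - n)
    · intro k i
      rcases Nat.lt_trichotomy k n' with hk | hk | hk
      · rw [hqNlow k hk i]; exact hok.2 k i
      · subst hk
        rw [hqNn' i, List.head?_append, hok.2 k i]
        rfl
      · have h1 : ¬ (k < n') := by omega
        have h2 : ¬ (k = n') := by omega
        rw [hqN]; simp only [h1, h2, if_false]
        exact hokπ''.2 (k - n) i
  -- the new tree
  set Q := W r qN with hQ
  have hrSdec : ∀ u : Str, u.length = n → rS u r qN = rS u r q ++ d (u.getD n' false) := by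
    intro u hu
    rw [rS_eq_Fl, rS_eq_Fl, hu]
    show Fl r qN (n'+1) _ = Fl r q (n'+1) _ ++ _
    simp only [Fl]
    rw [Fl_congr (q' := q) (g := fun k => u.getD k false) (fun j hj i => hqNlow j hj i)
      (fun _ _ => rfl)]
    rw [hqNn']
    rw [List.append_assoc]
  have hQu : ∀ u : Str, u.length = n →
      splitS Q u = W (rS u r q ++ d (u.getD n' false)) π'' := by
    intro u hu
    rw [hQ, splitS_W hokN, hu, hrSdec u hu, ← hqNhigh]
  -- containment and membership for each part
  have hpart : ∀ u : Str, u.length = n →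
      splitS Q u ∈ P ∧ splitS Q u ⊆ splitS (W r q) u := by
    intro u hu
    have hlenu : (rS u r q).length = L := by rw [rS_length hok, hu]
    rw [hQu u hu, splitS_W hok, hu]
    by_cases hju : u.getD n' false = i₀
    · -- translate of A''
      set τ := act (rS s r q) (rS u r q) with hτ
      have hτlen : τ.length = L := by rw [hτ, act_length, hlenu]
      have hkey : actT τ (W α'' π'') = W (rS u r q ++ d (u.getD n' false)) π'' := by
        rw [actW hokπ'' (by rw [hτlen, hαdec, List.length_append, hlens]; omega)]
        congr 1
        have hdi₀ : d i₀ = δ0 := by simp [hd]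
        rw [hαdec, act_append _ (by rw [hτlen, hlens]),
          act_xor (by rw [hlens, hlenu]), hju, hdi₀]
      have hkey2 : actT τ (W (rS s r q) (qS q n)) = W (rS u r q) (qS q n) := by
        rw [actW (hok.qS n) (by rw [hτlen, hlens]), act_xor (by rw [hlens, hlenu])]
      constructor
      · rw [← hkey]; exact hP.2.2 _ hA''P τ
      · rw [← hkey, ← hkey2]
        refine actT_mono τ ?_
        have hh : W α'' π'' ⊆ splitS (W r q) s := hA''sub.trans hAsub
        rwa [splitS_W hok, hs] at hh
    · -- translate of B''
      have hd1 : d (u.getD n' false) = δ1 := by simp only [hd]; exact if_neg hju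
      set τ := act (rS t r q) (rS u r q) with hτ
      have hτlen : τ.length = L := by rw [hτ, act_length, hlenu]
      have hkey : actT τ (W β'' π'') = W (rS u r q ++ d (u.getD n' false)) π'' := by
        rw [actW hokπ'' (by rw [hτlen, hβdec, List.length_append, hlent]; omega)]
        congr 1
        rw [hβdec, act_append _ (by rw [hτlen, hlent]),
          act_xor (by rw [hlent, hlenu]), hd1]
      have hkey2 : actT τ (W (rS t r q) (qS q n)) = W (rS u r q) (qS q n) := by
        rw [actW (hok.qS n) (by rw [hτlen, hlent]), act_xor (by rw [hlent, hlenu])]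
      constructor
      · rw [← hkey]; exact hP.2.2 _ hB''P τ
      · rw [← hkey, ← hkey2]
        refine actT_mono τ ?_
        have hh : W β'' π'' ⊆ splitS (W r q) t := hB''sub.trans hBsub
        rwa [splitS_W hok, ht] at hh
  have hQcoll : IsCollage P n Q := by
    refine ⟨IsLT_W hokN, fun u hu => (hpart u hu).1⟩
  have hQsubT : Q ⊆ W r q := by
    intro x hx
    obtain ⟨u, hu, hxu⟩ := exists_part hokN n (by omega) hx
    exact splitS_subset _ u ((hpart u hu).2 hxu)
  have hspl : ∀ k < n, spl Q k = spl (W r q) k := by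
    intro k hk
    rw [spl_eq (LTwit_W hokN) k, spl_eq (LTwit_W hok) k]
    exact splN_congr (fun j hj => by rw [hqNlow j (by omega) false])
  refine ⟨Q, hQcoll, ⟨hQsubT, hspl⟩, fun u hu => (hpart u hu).2, ?_⟩
  have hdi₀ : d i₀ = δ0 := by simp [hd]
  have hdi₁ : d (t.getD n' false) = δ1 := by
    simp only [hd]; exact if_neg (fun h => hst h.symm)
  have hQs : splitS Q s = W α'' π'' := by
    rw [hQu s hs, ← hi₀, hdi₀, ← hαdec]
  have hQt : splitS Q t = W β'' π'' := by
    rw [hQu t ht, hdi₁, ← hβdec]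
  rw [hQs, hQt]
  exact hD2

end Toolkit4
section Toolkit5

open List

/-- All binary strings of length `n`. -/
def allStr : ℕ → List Str
  | 0 => [[]]
  | n+1 => (allStr n).flatMap (fun u => [false :: u, true :: u])

lemma mem_allStr (s : Str) : s ∈ allStr s.length := by
  induction s with
  | nil => simp [allStr]
  | cons i u ih =>
      show i :: u ∈ (allStr u.length).flatMap (fun u => [false :: u, true :: u])
      rw [List.mem_flatMap]
      refine ⟨u, ih, ?_⟩
      cases i <;> simp

lemma subN_refl (n : ℕ) (T : Tr) : subN n T T := ⟨subset_rfl, fun _ _ => rfl⟩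

lemma subN_trans {n : ℕ} {S T U : Tr} (h1 : subN n S T) (h2 : subN n T U) : subN n S U :=
  ⟨h1.1.trans h2.1, fun k hk => (h1.2 k hk).trans (h2.2 k hk)⟩

lemma loop {P : Set Tr} (hP : IsLTF P) {D : Set (Tr × Tr)} (hD : OpenDense2 P D)
    (n' : ℕ) (L : List (Str × Str)) :
    ∀ (T : Tr), IsCollage P (n'+1) T →
    ∃ Q : Tr, IsCollage P (n'+1) Q ∧ subN (n'+1) Q T ∧
      (∀ u : Str, u.length = n'+1 → splitS Q u ⊆ splitS T u) ∧
      ∀ p ∈ L, p.1.length = n'+1 → p.2.length = n'+1 →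
        p.1.getD n' false ≠ p.2.getD n' false → (splitS Q p.1, splitS Q p.2) ∈ D := by
  induction L with
  | nil =>
      intro T hT
      exact ⟨T, hT, subN_refl _ T, fun _ _ => subset_rfl, fun p hp => absurd hp (by simp)⟩
  | cons p L ih =>
      intro T hT
      by_cases hval : p.1.length = n'+1 ∧ p.2.length = n'+1 ∧
          p.1.getD n' false ≠ p.2.getD n' false
      · obtain ⟨hs, ht, hne⟩ := hval
        obtain ⟨Q1, hQ1coll, hQ1sub, hQ1mono, hQ1D⟩ := onestep hP hD hT hs ht hne
        obtain ⟨Q, hQcoll, hQsub, hQmono, hQD⟩ := ih Q1 hQ1coll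
        refine ⟨Q, hQcoll, subN_trans hQsub hQ1sub,
          fun u hu => (hQmono u hu).trans (hQ1mono u hu), ?_⟩
        intro p' hp' h1 h2 h3
        rcases List.mem_cons.1 hp' with rfl | hp'
        · -- the head pair
          refine hD.2.2 _ ?_ _ hQ1D ⟨hQmono p'.1 h1, hQmono p'.2 h2⟩
          exact condPair_of_collage hQcoll h1 h2
        · exact hQD p' hp' h1 h2 h3
      · obtain ⟨Q, hQcoll, hQsub, hQmono, hQD⟩ := ih T hT
        refine ⟨Q, hQcoll, hQsub, hQmono, ?_⟩
        intro p' hp' h1 h2 h3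
        rcases List.mem_cons.1 hp' with rfl | hp'
        · exact absurd ⟨h1, h2, h3⟩ hval
        · exact hQD p' hp' h1 h2 h3

end Toolkit5
/-- Lemma `stf2+`: if `P` is a large-tree forcing notion, `n ≥ 1`, `T` an
`n`-collage over `P`, and `D` open dense in `P ×_{E0} P`, then there is an `n`-collage `Q`
over `P` with `Q ⊆_n T` such that `⟨Q→s, Q→t⟩ ∈ D` whenever `s, t ∈ 2^n` and
`s(n−1) ≠ t(n−1)`. -/
theorem stmt16 (P : Set Tr) (hP : IsLTF P) (n : ℕ) (hn : 1 ≤ n)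
    (T : Tr) (hT : IsCollage P n T) (D : Set (Tr × Tr)) (hD : OpenDense2 P D) :
    ∃ Q : Tr, IsCollage P n Q ∧ subN n Q T ∧
      ∀ s t : Str, s.length = n → t.length = n →
        s.getD (n-1) false ≠ t.getD (n-1) false → (splitS Q s, splitS Q t) ∈ D := by
  obtain ⟨n', rfl⟩ : ∃ n', n = n' + 1 := ⟨n - 1, by omega⟩
  set L : List (Str × Str) :=
    (allStr (n'+1)).flatMap (fun a => (allStr (n'+1)).map (fun b => (a, b))) with hL
  obtain ⟨Q, hQcoll, hQsub, _, hQD⟩ := loop hP hD n' L T hT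
  refine ⟨Q, hQcoll, hQsub, ?_⟩
  intro s t hs ht hne
  have hmem : (s, t) ∈ L := by
    rw [hL, List.mem_flatMap]
    refine ⟨s, ?_, ?_⟩
    · rw [← hs]; exact mem_allStr s
    · rw [List.mem_map]
      exact ⟨t, by rw [← ht]; exact mem_allStr t, rfl⟩
  have h1 : n' + 1 - 1 = n' := by omega
  rw [h1] at hne
  exact hQD (s, t) hmem hs ht hne

end E0L
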